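/- In the graph G' output by the greedy spanner algorithm, every edge e of G' not in T and every path P in G' such that e+P forms a simple cycle satisfy (1+ε)·w(e) < w(P). -/

import Mathlib

open scoped Classical
noncomputable section

/-- Weighted length of a walk: sum of edge weights with multiplicity. -/
def wlen {V : Type*} (w : Sym2 V → ℝ) {G : SimpleGraph V} {u v : V}
    (p : G.Walk u v) : ℝ :=
  (p.edges.map w).sum

/-- Weighted shortest-path distance: infimum of weighted lengths of walks. -/
def wdist {V : Type*} (G : SimpleGraph V) (w : Sym2 V → ℝ) (u v : V) : ℝ :=
  sInf {x : ℝ | ∃ p : G.Walk u v, wlen w p = x}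

/-- `T` is a spanning tree of `G`. -/
def IsSpanningTree {V : Type*} (G T : SimpleGraph V) : Prop :=
  T ≤ G ∧ T.IsTree

/-- One step of the greedy spanner algorithm: add the edge `{p.1, p.2}` iff
`(1+ε)·w(e)` is strictly less than the current distance between its endpoints. -/
def greedyStep {V : Type*} (ε : ℝ) (w : Sym2 V → ℝ)
    (G' : SimpleGraph V) (p : V × V) : SimpleGraph V :=
  if (1 + ε) * w s(p.1, p.2) < wdist G' w p.1 p.2 then
    G' ⊔ SimpleGraph.fromEdgeSet {s(p.1, p.2)}
  else G'

/-- The greedy spanner algorithm: start from `T` and process the listed edges in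
order, adding each edge iff it is not yet `(1+ε)`-approximated. -/
def greedy {V : Type*} (ε : ℝ) (w : Sym2 V → ℝ)
    (T : SimpleGraph V) (l : List (V × V)) : SimpleGraph V :=
  l.foldl (greedyStep ε w) T

/-- `l` lists exactly the edges of `G` not in `T` (each once, in some orientation),
in non-decreasing order of weight. -/
def IsGreedyInput {V : Type*} (G T : SimpleGraph V) (w : Sym2 V → ℝ)
    (l : List (V × V)) : Prop :=
  (l.map fun p => w s(p.1, p.2)).Pairwise (· ≤ ·) ∧
  (l.map fun p => s(p.1, p.2)).Nodup ∧
  (∀ p ∈ l, G.Adj p.1 p.2 ∧ ¬ T.Adj p.1 p.2) ∧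
  (∀ u v : V, G.Adj u v → ¬ T.Adj u v → s(u, v) ∈ l.map fun p => s(p.1, p.2))

namespace GreedyProof

open SimpleGraph Walk

variable {V : Type*} {w : Sym2 V → ℝ} {ε : ℝ}

lemma wlen_nonneg (hw : ∀ e, 0 ≤ w e) {G : SimpleGraph V} {u v : V}
    (p : G.Walk u v) : 0 ≤ wlen w p := by
  apply List.sum_nonneg
  rintro x hx
  obtain ⟨e, -, rfl⟩ := List.mem_map.1 hx
  exact hw e

lemma wdist_le (hw : ∀ e, 0 ≤ w e) {G : SimpleGraph V} {u v : V} (p : G.Walk u v) :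
    wdist G w u v ≤ wlen w p :=
  csInf_le ⟨0, by rintro x ⟨q, rfl⟩; exact wlen_nonneg hw q⟩ ⟨p, rfl⟩

lemma wlen_reverse {G : SimpleGraph V} {u v : V} (p : G.Walk u v) :
    wlen w p.reverse = wlen w p := by
  simp [wlen, SimpleGraph.Walk.edges_reverse, List.map_reverse, List.sum_reverse]

lemma wdist_symm {G : SimpleGraph V} (u v : V) : wdist G w u v = wdist G w v u := by
  unfold wdist
  congr 1
  ext x
  constructor <;> rintro ⟨p, rfl⟩ <;> exact ⟨p.reverse, wlen_reverse p⟩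

lemma wdist_congr {G : SimpleGraph V} {a b c d : V} (h : s(a, b) = s(c, d)) :
    wdist G w a b = wdist G w c d := by
  rcases Sym2.eq_iff.1 h with ⟨rfl, rfl⟩ | ⟨rfl, rfl⟩
  · rfl
  · exact wdist_symm _ _

lemma le_greedyStep (G' : SimpleGraph V) (p : V × V) : G' ≤ greedyStep ε w G' p := by
  unfold greedyStep; split
  · exact le_sup_left
  · exact le_rfl

lemma greedy_cons (T : SimpleGraph V) (q : V × V) (l : List (V × V)) :
    greedy ε w T (q :: l) = greedy ε w (greedyStep ε w T q) l := rfl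

lemma le_greedy (T : SimpleGraph V) (l : List (V × V)) : T ≤ greedy ε w T l := by
  induction l generalizing T with
  | nil => exact le_rfl
  | cons q l ih => exact (le_greedyStep T q).trans (ih _)

lemma greedy_append (T : SimpleGraph V) (l₁ l₂ : List (V × V)) :
    greedy ε w T (l₁ ++ l₂) = greedy ε w (greedy ε w T l₁) l₂ :=
  List.foldl_append

lemma greedy_mono_append (T : SimpleGraph V) (l₁ l₂ : List (V × V)) :
    greedy ε w T l₁ ≤ greedy ε w T (l₁ ++ l₂) := by
  rw [greedy_append]; exact le_greedy _ _

lemma edgeSet_greedy_subset (T : SimpleGraph V) (l : List (V × V)) :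
    (greedy ε w T l).edgeSet ⊆ T.edgeSet ∪ {e | e ∈ l.map fun p => s(p.1, p.2)} := by
  induction l generalizing T with
  | nil => simp [greedy]
  | cons q l ih =>
    rw [greedy_cons]
    refine (ih _).trans ?_
    have hstep : (greedyStep ε w T q).edgeSet ⊆ T.edgeSet ∪ {s(q.1, q.2)} := by
      unfold greedyStep; split
      · rw [SimpleGraph.edgeSet_sup, SimpleGraph.edgeSet_fromEdgeSet]
        exact Set.union_subset_union le_rfl Set.diff_subset
      · exact Set.subset_union_left
    intro e he
    rcases he with he | he
    · rcases hstep he with h | h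
      · exact Or.inl h
      · simp only [Set.mem_singleton_iff] at h
        exact Or.inr (by simp [h])
    · exact Or.inr (by simp at he ⊢; tauto)


lemma added (T : SimpleGraph V) (l : List (V × V)) {l₁ : List (V × V)} {q : V × V}
    {l₂ : List (V × V)} (hsplit : l = l₁ ++ q :: l₂)
    (hqd : q.1 ≠ q.2)
    (h1 : s(q.1, q.2) ∉ l₁.map fun p => s(p.1, p.2))
    (h2 : s(q.1, q.2) ∉ l₂.map fun p => s(p.1, p.2))
    (hT : s(q.1, q.2) ∉ T.edgeSet)
    (hmem : s(q.1, q.2) ∈ (greedy ε w T l).edgeSet) :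
    (1 + ε) * w s(q.1, q.2) < wdist (greedy ε w T l₁) w q.1 q.2 ∧
      s(q.1, q.2) ∈ (greedy ε w T (l₁ ++ [q])).edgeSet := by
  subst hsplit
  set A := greedy ε w T l₁ with hA
  have hnA : s(q.1, q.2) ∉ A.edgeSet := by
    intro h
    rcases edgeSet_greedy_subset T l₁ h with h | h
    · exact hT h
    · exact h1 h
  rw [greedy_append] at hmem
  rw [greedy_cons] at hmem
  by_cases hcond : (1 + ε) * w s(q.1, q.2) < wdist A w q.1 q.2
  · constructor
    · exact hcond
    · rw [greedy_append]
      show s(q.1, q.2) ∈ (greedy ε w (greedyStep ε w A q) [q].tail).edgeSet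
      simp only [greedy, List.foldl_nil, List.tail]
      unfold greedyStep
      rw [if_pos hcond, SimpleGraph.edgeSet_sup, SimpleGraph.edgeSet_fromEdgeSet]
      exact Or.inr ⟨rfl, by simp [hqd]⟩
  · exfalso
    have hstep : greedyStep ε w A q = A := by unfold greedyStep; rw [if_neg hcond]
    rw [hstep] at hmem
    rcases edgeSet_greedy_subset A l₂ hmem with h | h
    · exact hnA h
    · exact h2 h

lemma walk_split {G : SimpleGraph V} {x y : V} (W : G.Walk x y) (e : Sym2 V)
    (he : e ∈ W.edges) :
    ∃ (c d : V) (W₁ : G.Walk x c) (W₂ : G.Walk d y), s(c, d) = e ∧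
      W.edges = W₁.edges ++ s(c, d) :: W₂.edges := by
  induction W with
  | nil => simp at he
  | @cons a b y h W ih =>
    rw [SimpleGraph.Walk.edges_cons, List.mem_cons] at he
    rcases he with he | he
    · exact ⟨a, b, SimpleGraph.Walk.nil, W, he.symm, by simp⟩
    · obtain ⟨c, d, W₁, W₂, hcd, hE⟩ := ih he
      exact ⟨c, d, SimpleGraph.Walk.cons h W₁, W₂, hcd, by simp [hE]⟩


lemma list_split {α : Type*} (l : List α) (i : Fin l.length) :
    l = l.take i ++ l.get i :: l.drop (i + 1) := by
  conv_lhs => rw [← List.take_append_drop (i : ℕ) l]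
  congr 1
  exact List.drop_eq_getElem_cons i.isLt

lemma notmem_take_drop {α β : Type*} (f : α → β) (l : List α)
    (hnd : (l.map f).Nodup) (i : Fin l.length) :
    f (l.get i) ∉ (l.take (i : ℕ)).map f ∧ f (l.get i) ∉ (l.drop ((i : ℕ) + 1)).map f := by
  have h := hnd
  conv at h => rw [list_split l i]
  rw [List.map_append, List.map_cons, List.nodup_append] at h
  obtain ⟨-, h2, hdisj⟩ := h
  exact ⟨fun hm => hdisj _ hm _ List.mem_cons_self rfl, (List.nodup_cons.1 h2).1⟩

lemma take_concat {α : Type*} (l : List α) (i : Fin l.length) :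
    l.take (i : ℕ) ++ [l.get i] = l.take ((i : ℕ) + 1) := by
  rw [List.take_succ, List.getElem?_eq_getElem i.isLt]
  rfl

lemma greedy_take_mono (T : SimpleGraph V) (l : List (V × V)) {a b : ℕ} (h : a ≤ b) :
    greedy ε w T (l.take a) ≤ greedy ε w T (l.take b) := by
  have hb : l.take b = l.take a ++ (l.drop a).take (b - a) := by
    rw [← List.take_add]
    congr 1
    omega
  rw [hb]
  exact greedy_mono_append _ _ _

end GreedyProof

open GreedyProof

/-- in the greedy spanner output `G'`, every non-tree edge `e = {u,v}`
of `G'` and every path `P` in `G'` forming a simple cycle with `e` satisfy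
`(1+ε)·w(e) < w(P)`. -/
theorem stmt3 {V : Type*} [Fintype V]
    (G T : SimpleGraph V) (w : Sym2 V → ℝ) (ε : ℝ) (l : List (V × V))
    (hconn : G.Connected) (hT : IsSpanningTree G T)
    (hw : ∀ e, 0 ≤ w e) (hε : 0 < ε)
    (hl : IsGreedyInput G T w l) :
    ∀ (u v : V) (hadj : (greedy ε w T l).Adj u v), ¬ T.Adj u v →
      ∀ p : (greedy ε w T l).Walk v u,
        (SimpleGraph.Walk.cons hadj p).IsCycle →
        (1 + ε) * w s(u, v) < wlen w p := by
  obtain ⟨hsort, hnodup, hmemG, hcover⟩ := hl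
  intro u v hadj hTuv p hcyc
  have hCnd : (s(u, v) :: p.edges).Nodup := by
    have := hcyc.edges_nodup
    simpa using this
  have hCE : ∀ f ∈ s(u, v) :: p.edges, f ∈ (greedy ε w T l).edgeSet := by
    intro f hf
    rcases List.mem_cons.1 hf with rfl | hf
    · exact hadj
    · exact p.edges_subset_edgeSet hf
  have hTuv' : s(u, v) ∉ T.edgeSet := hTuv
  have huv_l : s(u, v) ∈ l.map fun p => s(p.1, p.2) := by
    rcases edgeSet_greedy_subset T l (show s(u,v) ∈ (greedy ε w T l).edgeSet from hadj) with h | h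
    · exact (hTuv' h).elim
    · exact h
  set S : Finset (Fin l.length) :=
    Finset.univ.filter (fun i => s((l.get i).1, (l.get i).2) ∈ s(u, v) :: p.edges) with hSdef
  obtain ⟨q0, hq0l, hq0⟩ := List.mem_map.1 huv_l
  obtain ⟨i0, hi0⟩ := List.mem_iff_get.1 hq0l
  have hi0S : i0 ∈ S := by
    rw [hSdef, Finset.mem_filter]
    exact ⟨Finset.mem_univ _, by rw [hi0, hq0]; exact List.mem_cons_self⟩
  set j := S.max' ⟨i0, hi0S⟩ with hjdef
  set q := l.get j with hqdef
  have hjS : j ∈ S := S.max'_mem _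
  have hqC : s(q.1, q.2) ∈ s(u, v) :: p.edges := (Finset.mem_filter.1 hjS).2
  have hsplit : l = l.take (j : ℕ) ++ q :: l.drop ((j : ℕ) + 1) := list_split l j
  obtain ⟨h1, h2⟩ := notmem_take_drop (fun p => s(p.1, p.2)) l hnodup j
  have hql : q ∈ l := by rw [hqdef]; exact List.get_mem l j
  obtain ⟨hGq, hTq⟩ := hmemG q hql
  have hqd : q.1 ≠ q.2 := hGq.ne
  have hmemq : s(q.1, q.2) ∈ (greedy ε w T l).edgeSet := hCE _ hqC
  obtain ⟨hlt, -⟩ := added T l hsplit hqd h1 h2 hTq hmemq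
  set Gj := greedy ε w T (l.take (j : ℕ)) with hGjdef
  -- every cycle edge other than s(q) is already in Gj
  have hstep : ∀ f ∈ s(u, v) :: p.edges, f ≠ s(q.1, q.2) → f ∈ Gj.edgeSet := by
    intro f hf hfq
    by_cases hfT : f ∈ T.edgeSet
    · exact SimpleGraph.edgeSet_mono (le_greedy T _) hfT
    · have hfG' : f ∈ (greedy ε w T l).edgeSet := hCE f hf
      have hfl : f ∈ l.map fun p => s(p.1, p.2) := by
        rcases edgeSet_greedy_subset T l hfG' with h | h
        · exact (hfT h).elim
        · exact h
      obtain ⟨qi, hqil, hqif⟩ := List.mem_map.1 hfl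
      obtain ⟨i, hi⟩ := List.mem_iff_get.1 hqil
      have hiS : i ∈ S := by
        rw [hSdef, Finset.mem_filter]
        exact ⟨Finset.mem_univ _, by rw [hi, hqif]; exact hf⟩
      have hij : i ≤ j := S.le_max' i hiS
      have hine : i ≠ j := by
        rintro rfl
        exact hfq (by rw [← hqif, ← hi])
      have hilt : (i : ℕ) + 1 ≤ (j : ℕ) := by
        have : (i : ℕ) < (j : ℕ) :=
          lt_of_le_of_ne (by exact_mod_cast hij) (fun h => hine (Fin.ext h))
        omega
      obtain ⟨h1i, h2i⟩ := notmem_take_drop (fun p => s(p.1, p.2)) l hnodup i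
      obtain ⟨hGqi, hTqi⟩ := hmemG (l.get i) (List.get_mem l i)
      have hf_eq : s((l.get i).1, (l.get i).2) = f := by rw [hi, hqif]
      obtain ⟨-, hin⟩ := added T l (list_split l i) hGqi.ne h1i h2i hTqi
        (by rw [hf_eq]; exact hfG')
      rw [hf_eq] at hin
      have hle : greedy ε w T (l.take (i : ℕ) ++ [l.get i]) ≤ Gj := by
        rw [take_concat l i, hGjdef]
        exact greedy_take_mono T l hilt
      exact SimpleGraph.edgeSet_mono hle hin
  -- weight comparison via sortedness
  have hw_le : w s(u, v) ≤ w s(q.1, q.2) := by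
    have hij : i0 ≤ j := S.le_max' i0 hi0S
    have hlm : ∀ (k : Fin l.length),
        (l.map fun p => w s(p.1, p.2)).get (Fin.cast (by simp) k)
          = w s((l.get k).1, (l.get k).2) := by
      intro k
      simp
    have := hsort.rel_get_of_le
      (a := Fin.cast (by simp) i0) (b := Fin.cast (by simp) j)
      (by simpa using hij)
    rw [hlm i0, hlm j] at this
    rw [← hq0, ← hi0]
    exact this
  by_cases hfe : s(q.1, q.2) = s(u, v)
  · -- the maximal edge is e itself: all of p lies in Gj
    have hpe : ∀ f ∈ p.edges, f ∈ Gj.edgeSet := by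
      intro f hf
      refine hstep f (List.mem_cons_of_mem _ hf) ?_
      rintro rfl
      rw [hfe] at hf
      exact (List.nodup_cons.1 hCnd).1 hf
    have hle : wdist Gj w v u ≤ wlen w p := by
      have h := wdist_le hw (p.transfer Gj hpe)
      rwa [show wlen w (p.transfer Gj hpe) = wlen w p by
        simp [wlen, SimpleGraph.Walk.edges_transfer]] at h
    calc (1 + ε) * w s(u, v) = (1 + ε) * w s(q.1, q.2) := by rw [hfe]
      _ < wdist Gj w q.1 q.2 := hlt
      _ = wdist Gj w v u := wdist_congr (hfe.trans (Sym2.eq_swap))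
      _ ≤ wlen w p := hle
  · -- the maximal edge is on p
    have hpq : s(q.1, q.2) ∈ p.edges := by
      rcases List.mem_cons.1 hqC with h | h
      · exact (hfe h).elim
      · exact h
    obtain ⟨c, d, W₁, W₂, hcd, hE⟩ := walk_split p s(q.1, q.2) hpq
    rw [hE] at hCnd
    obtain ⟨huvmem, hnd3⟩ := List.nodup_cons.1 hCnd
    obtain ⟨-, hnd4, hdisj⟩ := List.nodup_append.1 hnd3
    have hcdW2 : s(c, d) ∉ W₂.edges := (List.nodup_cons.1 hnd4).1
    have hcdW1 : s(c, d) ∉ W₁.edges := fun h => hdisj _ h _ List.mem_cons_self rfl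
    have hcduv : s(c, d) ≠ s(u, v) := by
      rintro h
      exact huvmem (by rw [← h]; exact List.mem_append_right _ List.mem_cons_self)
    set D := W₂.append (SimpleGraph.Walk.cons hadj W₁) with hDdef
    have hDE : D.edges = W₂.edges ++ s(u, v) :: W₁.edges := by
      rw [hDdef, SimpleGraph.Walk.edges_append, SimpleGraph.Walk.edges_cons]
    have hDG : ∀ f ∈ D.edges, f ∈ Gj.edgeSet := by
      intro f hf
      rw [hDE] at hf
      refine hstep f ?_ ?_
      · rw [hE]
        simp only [List.mem_append, List.mem_cons] at hf ⊢
        tauto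
      · rw [← hcd]
        rintro rfl
        rcases List.mem_append.1 hf with h | h
        · exact hcdW2 h
        · rcases List.mem_cons.1 h with h | h
          · exact hcduv h
          · exact hcdW1 h
    have hDle : wdist Gj w d c ≤ wlen w D := by
      have h := wdist_le hw (D.transfer Gj hDG)
      rwa [show wlen w (D.transfer Gj hDG) = wlen w D by
        simp [wlen, SimpleGraph.Walk.edges_transfer]] at h
    have hwp : wlen w p = wlen w W₁ + (w s(c, d) + wlen w W₂) := by
      simp [wlen, hE]
    have hwD : wlen w D = wlen w W₂ + (w s(u, v) + wlen w W₁) := by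
      simp [wlen, hDE]
    have hdq : wdist Gj w q.1 q.2 = wdist Gj w d c :=
      wdist_congr (hcd.symm.trans Sym2.eq_swap)
    have hwq : w s(c, d) = w s(q.1, q.2) := by rw [hcd]
    have key : (1 + ε) * w s(q.1, q.2) < wlen w p - w s(q.1, q.2) + w s(u, v) := by
      rw [hwp, ← hwq]
      have h5 := hlt.trans_le (hdq.le.trans hDle)
      rw [hwD, ← hwq] at h5
      linarith
    have hmul : (1 + ε) * w s(u, v) ≤ (1 + ε) * w s(q.1, q.2) :=
      mul_le_mul_of_nonneg_left hw_le (by linarith)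
    linarith
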